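/- Define f : ℂ⁴ → ℂ by f(x,y,z,λ) = x(y² + λz − 1)(λy² + λ²z − λ + 1) and F : ℂ⁴ → ℂ² by F(x,y,z,λ) = (f(x,y,z,λ), λ). Then F is not locally topologically trivial at the point (1,0) ∈ ℂ²: there do not exist an open neighborhood D of (1,0) in ℂ² and a homeomorphism Φ : F⁻¹(D) → F⁻¹(1,0) × D such that the composition of Φ with the projection onto D equals the restriction of F to F⁻¹(D). In particular (1,0) is a bifurcation value of F, i.e., F is not locally C^∞ trivial at (1,0). -/

import Mathlib

set_option maxHeartbeats 1000000

open Complex Set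

private lemma tele_prod (a : ℕ → ℂ) (ha : ∀ i, a i ≠ 0) (k : ℕ) :
    (∏ i ∈ Finset.range k, a (i + 1) / a i) = a k / a 0 := by
  induction k with
  | zero => simp [div_self (ha 0)]
  | succ k ih =>
      rw [Finset.prod_range_succ, ih, div_mul_div_comm]
      rw [mul_comm (a 0) (a k), mul_div_mul_left _ _ (ha k)]

private lemma no_winding_homotopy (H : ℝ → ℝ → ℂ)
    (hc : Continuous fun p : ℝ × ℝ => H p.1 p.2)
    (hne : ∀ s θ, H s θ ≠ 0)
    (h0 : ∀ θ, H 0 θ = 1)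
    (hper : ∀ s, H s 0 = H s (2 * Real.pi))
    (h1 : ∀ θ, H 1 θ = Complex.exp (θ * Complex.I) / 2) : False := by
  have pi_pos := Real.pi_pos
  set K : Set (ℝ × ℝ) := Icc (0:ℝ) 1 ×ˢ Icc (0:ℝ) (2 * Real.pi) with hK
  have hKc : IsCompact K := isCompact_Icc.prod isCompact_Icc
  have hKne : K.Nonempty := ⟨(0, 0), ⟨⟨le_refl 0, zero_le_one⟩, ⟨le_refl 0, by positivity⟩⟩⟩
  obtain ⟨p₀, hp₀K, hp₀⟩ := hKc.exists_isMinOn hKne (hc.norm.continuousOn)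
  set m : ℝ := ‖H p₀.1 p₀.2‖ with hm
  have hmpos : 0 < m := norm_pos_iff.mpr (hne _ _)
  have hmin : ∀ p ∈ K, m ≤ ‖H p.1 p.2‖ := fun p hp => hp₀ hp
  have huc := (hKc.uniformContinuousOn_of_continuous hc.continuousOn)
  obtain ⟨δ, hδpos, hδ⟩ := Metric.uniformContinuousOn_iff.mp huc m hmpos
  obtain ⟨n, hn⟩ := exists_nat_one_div_lt hδpos
  set N : ℕ := n + 1 with hN
  have hNpos : (0:ℝ) < N := by positivity
  set a : ℕ → ℝ → ℂ := fun i θ => H ((i : ℝ) / N) θ with ha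
  have haK : ∀ i : ℕ, i ≤ N → ∀ θ ∈ Icc (0:ℝ) (2 * Real.pi), ((i : ℝ) / N, θ) ∈ K := by
    intro i hi θ hθ
    refine ⟨⟨by positivity, ?_⟩, hθ⟩
    rw [div_le_one hNpos]
    exact_mod_cast hi
  have hane : ∀ i θ, a i θ ≠ 0 := fun i θ => hne _ _
  set R : ℕ → ℝ → ℂ := fun i θ => a (i + 1) θ / a i θ with hR
  have hRne : ∀ i θ, R i θ ≠ 0 := fun i θ => div_ne_zero (hane _ _) (hane _ _)
  have hRclose : ∀ i : ℕ, i < N → ∀ θ ∈ Icc (0:ℝ) (2 * Real.pi), ‖R i θ - 1‖ < 1 := by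
    intro i hi θ hθ
    have h1K := haK (i + 1) (by omega) θ hθ
    have h2K := haK i (by omega) θ hθ
    have hdN : dist ((((i:ℕ) + 1 : ℕ) :ℝ) / N) ((i:ℝ) / N) = 1 / N := by
      rw [Real.dist_eq, div_sub_div_same]
      rw [show ((((i:ℕ) + 1 : ℕ)):ℝ) - i = 1 by push_cast; ring]
      exact abs_of_nonneg (by positivity)
    have hdist : dist ((((((i:ℕ) + 1 : ℕ):ℝ) / N, θ)) : ℝ × ℝ) (((i:ℝ) / N, θ)) < δ := by
      rw [Prod.dist_eq]
      simp only [dist_self, hdN]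
      have h1N : (1:ℝ) / N < δ := by rw [hN]; push_cast; exact hn
      rw [sup_lt_iff]
      exact ⟨h1N, hδpos⟩
    have hHd : ‖a (i + 1) θ - a i θ‖ < m := by
      have h2 := hδ ((((i:ℕ) + 1 : ℕ):ℝ) / N, θ) h1K (((i:ℝ) / N), θ) h2K hdist
      rw [dist_eq_norm] at h2
      exact h2
    have hmi : m ≤ ‖a i θ‖ := hmin _ h2K
    have hsplit : R i θ - 1 = (a (i + 1) θ - a i θ) / a i θ := by
      rw [hR, sub_div, div_self (hane i θ)]
    rw [hsplit, norm_div]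
    have hapos : (0:ℝ) < ‖a i θ‖ := norm_pos_iff.mpr (hane i θ)
    calc ‖a (i + 1) θ - a i θ‖ / ‖a i θ‖ < m / ‖a i θ‖ :=
            (div_lt_div_iff_of_pos_right hapos).mpr hHd
      _ ≤ 1 := by rw [div_le_one hapos]; exact hmi
  -- sum of logarithms of the ratios
  set G : ℝ → ℂ := fun θ => ∑ i ∈ Finset.range N, Complex.log (R i θ) with hG
  have hacont : ∀ i : ℕ, Continuous (fun θ => a i θ) := by
    intro i
    exact hc.comp ((continuous_const.prodMk continuous_id))
  have hRcont : ∀ i : ℕ, Continuous (fun θ => R i θ) := by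
    intro i
    exact (hacont (i+1)).div (hacont i) (fun θ => hane i θ)
  have hGcont : ContinuousOn G (Icc (0:ℝ) (2*Real.pi)) := by
    apply continuousOn_finset_sum
    intro i hi
    apply ContinuousOn.clog (hRcont i).continuousOn
    intro θ hθ
    have hcl := hRclose i (Finset.mem_range.mp hi) θ hθ
    rw [Complex.mem_slitPlane_iff]
    left
    have hre : |(R i θ - 1).re| ≤ ‖R i θ - 1‖ := Complex.abs_re_le_norm _
    have : (R i θ - 1).re = (R i θ).re - 1 := by simp
    rw [this] at hre
    have := abs_lt.mp (lt_of_le_of_lt hre hcl)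
    linarith [this.1]
  have hexpG : ∀ θ, Complex.exp (G θ) = H 1 θ := by
    intro θ
    rw [hG, Complex.exp_sum]
    have h2 : ∀ i ∈ Finset.range N, Complex.exp (Complex.log (R i θ)) = R i θ :=
      fun i _ => Complex.exp_log (hRne i θ)
    rw [Finset.prod_congr rfl h2]
    have h3 : (∏ i ∈ Finset.range N, R i θ) = a N θ / a 0 θ :=
      tele_prod (fun i => a i θ) (fun i => hane i θ) N
    rw [h3, ha]
    simp only [Nat.cast_zero, zero_div]
    rw [div_self (ne_of_gt hNpos), h0 θ, div_one]
  have hGper : G (2 * Real.pi) = G 0 := by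
    rw [hG]
    apply Finset.sum_congr rfl
    intro i _
    have : R i (2 * Real.pi) = R i 0 := by
      rw [hR]
      simp only [ha]
      rw [hper, hper]
    rw [this]
  -- the angular defect function
  set psi : ℝ → ℝ := fun θ => (G θ).im - θ with hpsi
  have hψcont : ContinuousOn psi (Icc (0:ℝ) (2*Real.pi)) :=
    (Complex.continuous_im.comp_continuousOn hGcont).sub continuousOn_id
  have hval : ∀ θ : ℝ, ∃ k : ℤ, psi θ = 2 * Real.pi * k := by
    intro θ
    have he : Complex.exp (G θ - θ * Complex.I + Complex.log 2) = 1 := by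
      rw [Complex.exp_add, Complex.exp_sub, Complex.exp_log (by norm_num : (2:ℂ) ≠ 0)]
      rw [hexpG θ, h1 θ]
      field_simp [Complex.exp_ne_zero]
    obtain ⟨k, hk⟩ := Complex.exp_eq_one_iff.mp he
    refine ⟨k, ?_⟩
    have hlog2im : (Complex.log 2).im = 0 := by
      rw [Complex.log_im]
      rw [show (2:ℂ) = ((2:ℝ):ℂ) by norm_num]
      exact Complex.arg_ofReal_of_nonneg (by norm_num)
    have e1 : (G θ - ↑θ * Complex.I + Complex.log 2).im
        = (G θ).im - θ + (Complex.log 2).im := by simp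
    have e2 : ((k : ℂ) * (2 * ↑Real.pi * Complex.I)).im = 2 * Real.pi * k := by
      simp [Complex.mul_im]
      ring
    have h3 : (G θ).im - θ + 0 = 2 * Real.pi * k := by
      rw [← hlog2im, ← e1, hk, e2]
    show (G θ).im - θ = 2 * Real.pi * k
    linarith [h3]
  -- endpoints and the intermediate value theorem
  obtain ⟨k0, hk0⟩ := hval 0
  have hψend : psi (2 * Real.pi) = psi 0 - 2 * Real.pi := by
    show (G (2*Real.pi)).im - 2*Real.pi = ((G 0).im - 0) - 2*Real.pi
    rw [hGper]
    ring
  have hmem : psi 0 - Real.pi ∈ Icc (psi (2 * Real.pi)) (psi 0) := by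
    rw [hψend]
    constructor <;> linarith
  have hIVT := intermediate_value_Icc' (by positivity : (0:ℝ) ≤ 2 * Real.pi) hψcont hmem
  obtain ⟨θs, _, hθs⟩ := hIVT
  obtain ⟨k, hk⟩ := hval θs
  rw [hk, hk0] at hθs
  have hpi : Real.pi ≠ 0 := ne_of_gt pi_pos
  have h4 : Real.pi * (2*(k:ℝ)) = Real.pi * (2*(k0:ℝ) - 1) := by
    ring_nf
    ring_nf at hθs
    linarith [hθs]
  have h5 := mul_left_cancel₀ hpi h4
  have h6 : (2 * k : ℤ) = 2 * k0 - 1 := by exact_mod_cast h5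
  omega


/-- For `f(x,y,z,λ) = x(y² + λz − 1)(λy² + λ²z − λ + 1)` and
`F(x,y,z,λ) = (f(x,y,z,λ), λ)`, the map `F` is not locally topologically trivial at
`(1,0) ∈ ℂ²`: there is no open neighborhood `D` of `(1,0)` and homeomorphism
`Φ : F⁻¹(D) ≃ F⁻¹(1,0) × D` commuting with the projection to `D`. -/
theorem stmt_19 (f : ℂ × ℂ × ℂ × ℂ → ℂ)
    (hf : ∀ x y z l : ℂ, f (x, y, z, l) =
      x * (y ^ 2 + l * z - 1) * (l * y ^ 2 + l ^ 2 * z - l + 1))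
    (F : ℂ × ℂ × ℂ × ℂ → ℂ × ℂ)
    (hF : ∀ p : ℂ × ℂ × ℂ × ℂ, F p = (f p, p.2.2.2)) :
    ¬ ∃ (D : Set (ℂ × ℂ)), IsOpen D ∧ ((1 : ℂ), (0 : ℂ)) ∈ D ∧
      ∃ Φ : (F ⁻¹' D) ≃ₜ (F ⁻¹' {((1 : ℂ), (0 : ℂ))}) × D,
        ∀ p : F ⁻¹' D, ((Φ p).2 : ℂ × ℂ) = F p := by
  rintro ⟨D, hD, hmemD, Φ, hΦ⟩
  obtain ⟨r, hr, hball⟩ := Metric.isOpen_iff.mp hD _ hmemD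
  set l1 : ℂ := ((r/2 : ℝ) : ℂ) with hl1
  have hl1ne : l1 ≠ 0 := by
    rw [hl1]
    exact_mod_cast Complex.ofReal_ne_zero.mpr (by positivity)
  -- clamping to [0,1]
  set clamp : ℝ → ℝ := fun s => max 0 (min s 1) with hclamp
  have hclampc : Continuous clamp := continuous_const.max (continuous_id.min continuous_const)
  have hclamp0 : ∀ s, 0 ≤ clamp s := fun s => le_max_left 0 _
  have hclamp1 : ∀ s, clamp s ≤ 1 := fun s => max_le (by norm_num) (min_le_right s 1)
  have hclampz : clamp 0 = 0 := by simp [hclamp]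
  have hclampo : clamp 1 = 1 := by simp [hclamp]
  -- the path of parameter values
  set τ : ℝ → ℂ × ℂ := fun s => ((1 : ℂ), ((clamp s : ℝ) : ℂ) * l1) with hτ
  have hτD : ∀ s, τ s ∈ D := by
    intro s
    apply hball
    rw [Metric.mem_ball, Prod.dist_eq]
    have h1 : dist (1:ℂ) 1 = 0 := dist_self 1
    have h2 : dist (((clamp s : ℝ) : ℂ) * l1) 0 ≤ r / 2 := by
      rw [dist_zero_right, norm_mul, hl1]
      rw [Complex.norm_real, Complex.norm_real, Real.norm_eq_abs, Real.norm_eq_abs,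
        _root_.abs_of_nonneg (hclamp0 s), _root_.abs_of_nonneg (by positivity : (0:ℝ) ≤ r/2)]
      calc clamp s * (r/2) ≤ 1 * (r/2) := by
              apply mul_le_mul_of_nonneg_right (hclamp1 s) (by positivity)
        _ = r/2 := one_mul _
    rw [h1]
    have : (0:ℝ) ⊔ dist (((clamp s : ℝ) : ℂ) * l1) 0 ≤ r/2 := by
      apply sup_le (by positivity) h2
    linarith
  -- the loop in the fiber over (1, l1)
  set e : ℝ → ℂ := fun θ => Complex.exp (θ * Complex.I) with he
  have hec : Continuous e := Complex.continuous_exp.comp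
    ((Complex.continuous_ofReal.mul continuous_const))
  have hene : ∀ θ, e θ ≠ 0 := fun θ => Complex.exp_ne_zero _
  have heabs : ∀ θ, ‖e θ‖ = 1 := by
    intro θ
    rw [he]
    simp [Complex.norm_exp]
  have heper : e (2 * Real.pi) = e 0 := by
    rw [he]
    simp only []
    push_cast
    rw [Complex.exp_two_pi_mul_I]
    simp
  set u : ℝ → ℂ := fun θ => (e θ / 2 - 1) / l1 with hu
  have hune : ∀ θ, u θ ≠ 0 := by
    intro θ
    apply div_ne_zero _ hl1ne
    intro h
    have : e θ = 2 := by
      field_simp at h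
      linear_combination h
    have h2 := heabs θ
    rw [this] at h2
    norm_num at h2
  set zc : ℝ → ℂ := fun θ => (u θ + 1) / l1 with hzc
  set xc : ℝ → ℂ := fun θ => (u θ * (e θ / 2))⁻¹ with hxc
  set B : ℝ → ℂ × ℂ × ℂ × ℂ := fun θ => (xc θ, 0, zc θ, l1) with hB
  have hBf : ∀ θ, f (B θ) = 1 := by
    intro θ
    rw [hB]
    simp only []
    rw [hf (xc θ) 0 (zc θ) l1]
    have h1 : (0:ℂ)^2 + l1 * zc θ - 1 = u θ := by
      rw [hzc]
      field_simp
      ring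
    have h2 : l1 * (0:ℂ)^2 + l1^2 * zc θ - l1 + 1 = e θ / 2 := by
      rw [hzc, hu]
      field_simp
      ring
    rw [h1, h2]
    show (u θ * (e θ / 2))⁻¹ * u θ * (e θ / 2) = 1
    rw [mul_assoc]
    exact inv_mul_cancel₀ (mul_ne_zero (hune θ) (div_ne_zero (hene θ) two_ne_zero))
  have hfactor2 : ∀ θ, l1 * (0:ℂ)^2 + l1^2 * zc θ - l1 + 1 = e θ / 2 := by
    intro θ
    rw [hzc, hu]
    field_simp
    ring
  have hBF : ∀ θ, F (B θ) = τ 1 := by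
    intro θ
    rw [hF (B θ)]
    have hsnd : (B θ).2.2.2 = l1 := rfl
    rw [hBf θ, hsnd, hτ]
    simp only [hclampo]
    norm_num
  have hBmem : ∀ θ, B θ ∈ F ⁻¹' D := fun θ => by
    rw [Set.mem_preimage, hBF θ]; exact hτD 1
  set p : ℝ → ↥(F ⁻¹' D) := fun θ => ⟨B θ, hBmem θ⟩ with hp
  have hu_c : Continuous u := by
    rw [hu]; exact ((hec.div_const 2).sub continuous_const).div_const l1
  have hz_c : Continuous zc := by
    rw [hzc]; exact (hu_c.add continuous_const).div_const l1
  have hx_c : Continuous xc := by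
    rw [hxc]
    exact Continuous.inv₀ (hu_c.mul (hec.div_const 2))
      (fun θ => mul_ne_zero (hune θ) (div_ne_zero (hene θ) two_ne_zero))
  have hBc : Continuous B := by
    rw [hB]
    exact hx_c.prodMk (continuous_const.prodMk (hz_c.prodMk continuous_const))
  have hpc : Continuous p := Continuous.subtype_mk hBc _
  set L : ℝ → ↥(F ⁻¹' ({((1:ℂ),(0:ℂ))} : Set (ℂ × ℂ))) := fun θ => (Φ (p θ)).1 with hL
  have hLc : Continuous L := continuous_fst.comp (Φ.continuous.comp hpc)
  set τD : ℝ → ↥D := fun s => ⟨τ s, hτD s⟩ with hτDdef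
  have hτc : Continuous τ := by
    rw [hτ]
    exact continuous_const.prodMk ((Complex.continuous_ofReal.comp hclampc).mul continuous_const)
  have hτDc : Continuous τD := Continuous.subtype_mk hτc _
  set q : ℝ → ℝ → ↥(F ⁻¹' D) := fun s θ => Φ.symm (L θ, τD s) with hq
  have hqF : ∀ s θ, F ((q s θ : ℂ × ℂ × ℂ × ℂ)) = τ s := by
    intro s θ
    rw [← hΦ (q s θ), hq]
    simp only []
    rw [Φ.apply_symm_apply]
  have hwf : ∀ s θ, f ((q s θ : ℂ × ℂ × ℂ × ℂ)) = 1 := by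
    intro s θ
    have h1 := hqF s θ
    rw [hF] at h1
    exact congrArg Prod.fst h1
  have hwl : ∀ s θ, ((q s θ : ℂ × ℂ × ℂ × ℂ)).2.2.2 = ((clamp s : ℝ) : ℂ) * l1 := by
    intro s θ
    have h1 := hqF s θ
    rw [hF] at h1
    exact congrArg Prod.snd h1
  set H : ℝ → ℝ → ℂ := fun s θ =>
    ((q s θ : ℂ × ℂ × ℂ × ℂ)).2.2.2 * ((q s θ : ℂ × ℂ × ℂ × ℂ)).2.1 ^ 2
      + ((q s θ : ℂ × ℂ × ℂ × ℂ)).2.2.2 ^ 2 * ((q s θ : ℂ × ℂ × ℂ × ℂ)).2.2.1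
      - ((q s θ : ℂ × ℂ × ℂ × ℂ)).2.2.2 + 1 with hH
  -- H never vanishes
  have hne' : ∀ s θ, H s θ ≠ 0 := by
    intro s θ h0
    have h1 : f ((q s θ : ℂ × ℂ × ℂ × ℂ)) = 1 := hwf s θ
    have h2 : f ((q s θ : ℂ × ℂ × ℂ × ℂ))
        = ((q s θ : ℂ × ℂ × ℂ × ℂ)).1
          * (((q s θ : ℂ × ℂ × ℂ × ℂ)).2.1 ^ 2
              + ((q s θ : ℂ × ℂ × ℂ × ℂ)).2.2.2 * ((q s θ : ℂ × ℂ × ℂ × ℂ)).2.2.1 - 1)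
          * (((q s θ : ℂ × ℂ × ℂ × ℂ)).2.2.2 * ((q s θ : ℂ × ℂ × ℂ × ℂ)).2.1 ^ 2
              + ((q s θ : ℂ × ℂ × ℂ × ℂ)).2.2.2 ^ 2 * ((q s θ : ℂ × ℂ × ℂ × ℂ)).2.2.1
              - ((q s θ : ℂ × ℂ × ℂ × ℂ)).2.2.2 + 1) :=
      hf ((q s θ : ℂ × ℂ × ℂ × ℂ)).1 ((q s θ : ℂ × ℂ × ℂ × ℂ)).2.1
        ((q s θ : ℂ × ℂ × ℂ × ℂ)).2.2.1 ((q s θ : ℂ × ℂ × ℂ × ℂ)).2.2.2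
    have h3 : H s θ
        = (((q s θ : ℂ × ℂ × ℂ × ℂ)).2.2.2 * ((q s θ : ℂ × ℂ × ℂ × ℂ)).2.1 ^ 2
              + ((q s θ : ℂ × ℂ × ℂ × ℂ)).2.2.2 ^ 2 * ((q s θ : ℂ × ℂ × ℂ × ℂ)).2.2.1
              - ((q s θ : ℂ × ℂ × ℂ × ℂ)).2.2.2 + 1) := rfl
    rw [h2, ← h3, h0, mul_zero] at h1
    exact zero_ne_one h1
  -- H at s = 0 is the constant loop 1
  have h0' : ∀ θ, H 0 θ = 1 := by
    intro θ
    have hl0 : ((q 0 θ : ℂ × ℂ × ℂ × ℂ)).2.2.2 = 0 := by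
      rw [hwl 0 θ, hclampz]
      simp
    rw [hH]
    simp only [hl0]
    ring
  -- H is a loop in θ
  have hBper : B (2 * Real.pi) = B 0 := by
    have h1 : u (2 * Real.pi) = u 0 := by rw [hu]; simp only [heper]
    have h2 : zc (2 * Real.pi) = zc 0 := by rw [hzc]; simp only [h1]
    have h3 : xc (2 * Real.pi) = xc 0 := by rw [hxc]; simp only [h1, heper]
    rw [hB]
    simp only [h2, h3]
  have hper' : ∀ s, H s 0 = H s (2 * Real.pi) := by
    intro s
    have hp2 : p (2 * Real.pi) = p 0 := Subtype.ext hBper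
    have hq2 : q s (2 * Real.pi) = q s 0 := by
      rw [hq]
      simp only [hL, hp2]
    rw [hH]
    simp only [hq2]
  -- H at s = 1 is the winding loop
  have h1' : ∀ θ, H 1 θ = Complex.exp (θ * Complex.I) / 2 := by
    intro θ
    have hsnd : (Φ (p θ)).2 = τD 1 := by
      apply Subtype.ext
      rw [hΦ (p θ)]
      exact hBF θ
    have hΦp : Φ (p θ) = (L θ, τD 1) := by
      rw [hL]
      exact Prod.ext rfl hsnd
    have hq1 : q 1 θ = p θ := by
      rw [hq]
      simp only []
      rw [← hΦp, Φ.symm_apply_apply]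
    rw [hH]
    simp only [hq1]
    show l1 * (0:ℂ)^2 + l1^2 * zc θ - l1 + 1 = Complex.exp (θ * Complex.I) / 2
    rw [hfactor2 θ, he]
  -- H is continuous
  have hqc : Continuous (fun sp : ℝ × ℝ => ((q sp.1 sp.2 : ℂ × ℂ × ℂ × ℂ))) := by
    apply continuous_subtype_val.comp
    apply (Homeomorph.continuous Φ.symm).comp
    exact (hLc.comp continuous_snd).prodMk (hτDc.comp continuous_fst)
  have hHc : Continuous (fun sp : ℝ × ℝ => H sp.1 sp.2) := by
    rw [hH]
    simp only []
    have hy := hqc.snd.fst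
    have hz := hqc.snd.snd.fst
    have hl := hqc.snd.snd.snd
    exact (((hl.mul (hy.pow 2)).add ((hl.pow 2).mul hz)).sub hl).add continuous_const
  exact no_winding_homotopy H hHc hne' h0' hper' h1'
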